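/- In the formal power series ring ℤ[[t, u_1, …, u_d]], let F := Σ_{l∈ℕ} Σ_{s∈ℕ^d, h_1 s_1+⋯+h_d s_d ≥ l} t^l·u_1^{s_1}⋯u_d^{s_d} (a well-defined power series, since each monomial t^l u^s occurs with coefficient 0 or 1). Then (1 − t)·(Π_{i=1}^d (1 − u_i t^{h_i}))·(Π_{i=1}^d (1 − u_i))·F = Π_{i=1}^d (1 − u_i t^{h_i}) − t·Π_{i=1}^d (1 − u_i). Equivalently, since 1 − t and 1 − u_i t^{h_i} are units in ℤ[[t, u_1,…,u_d]], Σ_{l≥0} t^l (Π_i (1−u_i)) Σ_{s: h·s ≥ l} u^s = 1/(1−t) − (t/(1−t))·Π_{i=1}^d (1−u_i)/(1−u_i t^{h_i}). -/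

import Mathlib

noncomputable section

open MvPowerSeries

namespace WBGF

open Finset

variable {d : ℕ} (h : Fin d → ℕ)

/-- partial geometric series `∑_{supp s ⊆ S} u^s` -/
def A (S : Finset (Fin d)) : MvPowerSeries (Option (Fin d)) ℤ := fun e =>
  if e none = 0 ∧ ∀ i ∉ S, e (some i) = 0 then 1 else 0

/-- partial geometric series `∑_{supp s ⊆ S} u^s t^{h·s}` -/
def B (S : Finset (Fin d)) : MvPowerSeries (Option (Fin d)) ℤ := fun e =>
  if e none = ∑ i ∈ S, h i * e (some i) ∧ ∀ i ∉ S, e (some i) = 0 then 1 else 0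

lemma coeff_A (S : Finset (Fin d)) (e : Option (Fin d) →₀ ℕ) :
    coeff e (A S) = if e none = 0 ∧ ∀ i ∉ S, e (some i) = 0 then 1 else 0 := rfl

lemma coeff_B (S : Finset (Fin d)) (e : Option (Fin d) →₀ ℕ) :
    coeff e (B h S) =
      if e none = ∑ i ∈ S, h i * e (some i) ∧ ∀ i ∉ S, e (some i) = 0 then 1 else 0 := rfl

lemma A_empty : A (∅ : Finset (Fin d)) = 1 := by
  ext e
  rw [coeff_A, coeff_one]
  by_cases he : e = 0
  · subst he; simp
  · rw [if_neg he, if_neg]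
    rintro ⟨h1, h2⟩
    apply he
    ext x
    match x with
    | none => simpa using h1
    | some i => simpa using h2 i (by simp)

lemma B_empty : B h (∅ : Finset (Fin d)) = 1 := by
  ext e
  rw [coeff_B, coeff_one]
  by_cases he : e = 0
  · subst he; simp
  · rw [if_neg, if_neg he]
    rintro ⟨h1, h2⟩
    apply he
    ext x
    match x with
    | none => simpa using h1
    | some i => simpa using h2 i (by simp)

lemma stepA {S : Finset (Fin d)} {j : Fin d} (hj : j ∉ S) :
    (1 - X (some j)) * A (insert j S) = A S := by
  ext e
  rw [sub_mul, one_mul, map_sub, X_def, coeff_monomial_mul, coeff_A, coeff_A]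
  set e1 : Option (Fin d) →₀ ℕ := e - Finsupp.single (some j) 1 with he1
  by_cases hje : e (some j) = 0
  · have hnle : ¬ ((Finsupp.single (some j) 1 : Option (Fin d) →₀ ℕ) ≤ e) := by
      rw [Finsupp.single_le_iff]; omega
    rw [if_neg hnle, sub_zero]
    apply if_congr _ rfl rfl
    constructor
    · rintro ⟨h1, h2⟩
      exact ⟨h1, fun i hi => by
        by_cases hij : i = j
        · subst hij; exact hje
        · exact h2 i (by simp [hij, hi])⟩
    · rintro ⟨h1, h2⟩
      exact ⟨h1, fun i hi => h2 i fun hiS => hi (Finset.mem_insert_of_mem hiS)⟩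
  · have hle : (Finsupp.single (some j) 1 : Option (Fin d) →₀ ℕ) ≤ e := by
      rw [Finsupp.single_le_iff]; omega
    have hP2 : ¬ (e none = 0 ∧ ∀ i ∉ S, e (some i) = 0) := fun H => hje (H.2 j hj)
    rw [if_pos hle, one_mul, coeff_A, if_neg hP2]
    have hnone : e1 none = e none := by
      rw [he1]; simp [Finsupp.tsub_apply, Finsupp.single_apply]
    have hsome : ∀ i : Fin d, i ≠ j → e1 (some i) = e (some i) := by
      intro i hij
      rw [he1]
      have hji : ¬ j = i := Ne.symm hij
      simp [Finsupp.tsub_apply, Finsupp.single_apply, hji]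
    have hiff : (e none = 0 ∧ ∀ i ∉ insert j S, e (some i) = 0) ↔
        (e1 none = 0 ∧ ∀ i ∉ insert j S, e1 (some i) = 0) := by
      rw [hnone]
      constructor
      · rintro ⟨h1, h2⟩
        refine ⟨h1, fun i hi => ?_⟩
        rw [hsome i (fun hij => hi (hij ▸ Finset.mem_insert_self j S))]
        exact h2 i hi
      · rintro ⟨h1, h2⟩
        refine ⟨h1, fun i hi => ?_⟩
        rw [← hsome i (fun hij => hi (hij ▸ Finset.mem_insert_self j S))]
        exact h2 i hi
    rw [if_congr hiff rfl rfl, sub_self]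

lemma prodA (S : Finset (Fin d)) :
    (∏ i ∈ S, (1 - (X (some i) : MvPowerSeries (Option (Fin d)) ℤ))) * A S = 1 := by
  induction S using Finset.induction_on with
  | empty => simp [A_empty]
  | insert j S hj ih =>
    rw [Finset.prod_insert hj, mul_comm (1 - X (some j)), mul_assoc, stepA hj, ih]

lemma stepB {S : Finset (Fin d)} {j : Fin d} (hj : j ∉ S) (hhj : 0 < h j) :
    (1 - monomial (Finsupp.single (some j) 1 + Finsupp.single none (h j)) 1) *
      B h (insert j S) = B h S := by
  ext e
  set m : Option (Fin d) →₀ ℕ := Finsupp.single (some j) 1 + Finsupp.single none (h j) with hm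
  rw [sub_mul, one_mul, map_sub, coeff_monomial_mul, coeff_B, coeff_B]
  have hmle : m ≤ e ↔ 1 ≤ e (some j) ∧ h j ≤ e none := by
    rw [Finsupp.le_def]
    constructor
    · intro H
      exact ⟨by simpa [hm, Finsupp.single_apply] using H (some j),
        by simpa [hm, Finsupp.single_apply] using H none⟩
    · rintro ⟨h1, h2⟩ x
      match x with
      | none => simpa [hm, Finsupp.single_apply] using h2
      | some i =>
        by_cases hij : j = i
        · subst hij; simpa [hm, Finsupp.single_apply] using h1
        · simp [hm, Finsupp.single_apply, hij]
  have hsum : ∑ i ∈ insert j S, h i * e (some i) =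
      h j * e (some j) + ∑ i ∈ S, h i * e (some i) := Finset.sum_insert hj
  by_cases hje : e (some j) = 0
  · have hnle : ¬ m ≤ e := fun H => by have := (hmle.mp H).1; omega
    rw [if_neg hnle, sub_zero]
    apply if_congr _ rfl rfl
    rw [hsum, hje, Nat.mul_zero, Nat.zero_add]
    constructor
    · rintro ⟨h1, h2⟩
      exact ⟨h1, fun i hi => by
        by_cases hij : i = j
        · subst hij; exact hje
        · exact h2 i (by simp [hij, hi])⟩
    · rintro ⟨h1, h2⟩
      exact ⟨h1, fun i hi => h2 i fun hiS => hi (Finset.mem_insert_of_mem hiS)⟩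
  · have hP2 : ¬ (e none = ∑ i ∈ S, h i * e (some i) ∧ ∀ i ∉ S, e (some i) = 0) :=
      fun H => hje (H.2 j hj)
    rw [coeff_B, if_neg hP2]
    have hj1 : 1 ≤ e (some j) := Nat.one_le_iff_ne_zero.mpr hje
    have hjmul : h j ≤ h j * e (some j) := Nat.le_mul_of_pos_right _ (by omega)
    by_cases hml : m ≤ e
    · rw [if_pos hml, one_mul]
      have hjle : h j ≤ e none := (hmle.mp hml).2
      have hnone : (e - m) none = e none - h j := by
        simp [hm, Finsupp.tsub_apply, Finsupp.single_apply]
      have hsj : (e - m) (some j) = e (some j) - 1 := by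
        simp [hm, Finsupp.tsub_apply, Finsupp.single_apply]
      have hsome : ∀ i : Fin d, i ≠ j → (e - m) (some i) = e (some i) := by
        intro i hij
        have hji : ¬ j = i := Ne.symm hij
        simp [hm, Finsupp.tsub_apply, Finsupp.single_apply, hji]
      have hsum2 : ∑ i ∈ S, h i * (e - m) (some i) = ∑ i ∈ S, h i * e (some i) :=
        Finset.sum_congr rfl fun i hi => by
          rw [hsome i (fun hij => hj (hij ▸ hi))]
      have hq : (∀ i ∉ insert j S, e (some i) = 0) ↔
          (∀ i ∉ insert j S, (e - m) (some i) = 0) := by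
        constructor
        · intro H i hi
          rw [hsome i (fun hij => hi (hij ▸ Finset.mem_insert_self j S))]
          exact H i hi
        · intro H i hi
          rw [← hsome i (fun hij => hi (hij ▸ Finset.mem_insert_self j S))]
          exact H i hi
      have hmul : h j * (e (some j) - 1) = h j * e (some j) - h j := Nat.mul_sub_one _ _
      have heq : (e none = ∑ i ∈ insert j S, h i * e (some i) ∧
            ∀ i ∉ insert j S, e (some i) = 0) ↔
          ((e - m) none = ∑ i ∈ insert j S, h i * (e - m) (some i) ∧
            ∀ i ∉ insert j S, (e - m) (some i) = 0) := by
        rw [Finset.sum_insert hj, Finset.sum_insert hj, hsum2, hnone, hsj, ← hq]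
        constructor
        · rintro ⟨h1, h2⟩
          exact ⟨by omega, h2⟩
        · rintro ⟨h1, h2⟩
          exact ⟨by omega, h2⟩
      rw [if_congr heq rfl rfl, sub_self]
    · rw [if_neg hml, sub_zero, if_neg]
      rintro ⟨h1, _⟩
      apply hml
      rw [hmle]
      constructor
      · exact hj1
      · rw [h1, hsum]; omega

lemma prodB (hh : ∀ i, 0 < h i) (S : Finset (Fin d)) :
    (∏ i ∈ S, (1 - monomial (Finsupp.single (some i) 1 + Finsupp.single none (h i)) 1)) *
      B h S = 1 := by
  induction S using Finset.induction_on with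
  | empty => simp [B_empty]
  | insert j S hj ih =>
    rw [Finset.prod_insert hj, mul_comm (1 - _), mul_assoc, stepB h hj (hh j), ih]

end WBGF

/-- The generating-function identity underlying the K-theory pushforward formula for a weighted
blowdown: in `ℤ[[t, u_1, …, u_d]]`, with
`F = ∑_{l, s : h·s ≥ l} t^l u^s`, one has
`(1−t)·(∏_i (1 − u_i t^{h_i}))·(∏_i (1 − u_i))·F = ∏_i (1 − u_i t^{h_i}) − t·∏_i (1 − u_i)`;
moreover `1 − t` and the `1 − u_i t^{h_i}` are units, so this is equivalent to
`∑_{l≥0} t^l (∏_i (1−u_i)) ∑_{s : h·s ≥ l} u^s = 1/(1−t) − (t/(1−t))·∏_i (1−u_i)/(1−u_i t^{h_i})`. -/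
theorem weighted_blowdown_generating_function
    (d : ℕ) (hd : 0 < d) (h : Fin d → ℕ) (hh : ∀ i, 0 < h i)
    (t : MvPowerSeries (Option (Fin d)) ℤ) (ht : t = MvPowerSeries.X none)
    (u : Fin d → MvPowerSeries (Option (Fin d)) ℤ) (hu : ∀ i, u i = MvPowerSeries.X (some i))
    (F : MvPowerSeries (Option (Fin d)) ℤ)
    (hF : ∀ e : Option (Fin d) →₀ ℕ,
      MvPowerSeries.coeff e F = if e none ≤ ∑ i, h i * e (some i) then 1 else 0) :
    IsUnit (1 - t) ∧ (∀ i, IsUnit (1 - u i * t ^ h i)) ∧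
    (1 - t) * (∏ i, (1 - u i * t ^ h i)) * ((∏ i, (1 - u i)) * F) =
      ∏ i, (1 - u i * t ^ h i) - t * ∏ i, (1 - u i) := by
  have hut : ∀ i, u i * t ^ h i =
      monomial (Finsupp.single (some i) 1 + Finsupp.single none (h i)) 1 := by
    intro i
    rw [hu, ht, X_pow_eq, X_def, monomial_mul_monomial, one_mul]
  refine ⟨?_, ?_, ?_⟩
  · rw [isUnit_iff_constantCoeff]
    simp [ht]
  · intro i
    rw [isUnit_iff_constantCoeff, map_sub, map_one, hut i,
      ← coeff_zero_eq_constantCoeff_apply, coeff_monomial, if_neg, sub_zero]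
    · exact isUnit_one
    · intro H
      have := DFunLike.congr_fun H (some i)
      simp [Finsupp.single_apply] at this
  · -- main identity
    have key : (1 - t) * F = WBGF.A Finset.univ - t * WBGF.B h Finset.univ := by
      ext e
      rw [sub_mul, one_mul, map_sub, map_sub, ht, X_def, coeff_monomial_mul,
        coeff_monomial_mul, WBGF.coeff_A, WBGF.coeff_B, hF]
      set e1 : Option (Fin d) →₀ ℕ := e - Finsupp.single none 1 with he1
      have hnone : e1 none = e none - 1 := by
        rw [he1]; simp [Finsupp.tsub_apply]
      have hsome : ∀ i : Fin d, e1 (some i) = e (some i) := by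
        intro i; rw [he1]; simp [Finsupp.tsub_apply, Finsupp.single_apply]
      have hsum : ∑ i, h i * e1 (some i) = ∑ i, h i * e (some i) :=
        Finset.sum_congr rfl fun i _ => by rw [hsome]
      simp only [Finset.mem_univ, not_true, false_implies, implies_true, and_true]
      by_cases h1 : 1 ≤ e none
      · have hle : (Finsupp.single (none : Option (Fin d)) 1 : Option (Fin d) →₀ ℕ) ≤ e := by
          rw [Finsupp.single_le_iff]; omega
        rw [if_pos hle, if_pos hle, one_mul, hF, hsum, hnone]
        split_ifs <;> omega
      · have hnle : ¬ ((Finsupp.single (none : Option (Fin d)) 1 : Option (Fin d) →₀ ℕ) ≤ e) := by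
          rw [Finsupp.single_le_iff]; omega
        rw [if_neg hnle, if_neg hnle, sub_zero, sub_zero]
        split_ifs <;> omega
    have hA : (∏ i, (1 - u i)) * WBGF.A Finset.univ = 1 := by
      have := WBGF.prodA (d := d) Finset.univ
      simpa [hu] using this
    have hB : (∏ i, (1 - u i * t ^ h i)) * WBGF.B h Finset.univ = 1 := by
      have := WBGF.prodB h hh Finset.univ
      simpa [hut] using this
    calc (1 - t) * (∏ i, (1 - u i * t ^ h i)) * ((∏ i, (1 - u i)) * F)
        = (∏ i, (1 - u i * t ^ h i)) * (∏ i, (1 - u i)) * ((1 - t) * F) := by ring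
      _ = (∏ i, (1 - u i * t ^ h i)) * (∏ i, (1 - u i)) *
            (WBGF.A Finset.univ - t * WBGF.B h Finset.univ) := by rw [key]
      _ = (∏ i, (1 - u i * t ^ h i)) * ((∏ i, (1 - u i)) * WBGF.A Finset.univ)
            - t * ((∏ i, (1 - u i)) * ((∏ i, (1 - u i * t ^ h i)) * WBGF.B h Finset.univ)) := by
          ring
      _ = ∏ i, (1 - u i * t ^ h i) - t * ∏ i, (1 - u i) := by rw [hA, hB, mul_one, mul_one]

end
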